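/- Suppose 1 ≤ p < ∞, 1 ≤ r ≤ ∞, F ∈ L^p([0,∞)) is a locally absolutely continuous nonnegative function, G ∈ L^r([0,∞)), and (d/dt)F(t) ≤ G(t) for almost all t. Then F(t) → 0 as t → ∞. -/

import Mathlib

open MeasureTheory Filter
open scoped ENNReal

/-- A real function is locally absolutely continuous on `[0, ∞)` with a.e.
derivative `F'` if it is the integral of `F'` on nonnegative intervals. -/
def IsLocACReal (F F' : ℝ → ℝ) : Prop :=
  (∀ a b : ℝ, 0 ≤ a → 0 ≤ b → IntegrableOn F' (Set.uIcc a b)) ∧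
    ∀ s t : ℝ, 0 ≤ s → 0 ≤ t → F t - F s = ∫ u in s..t, F' u

lemma aux_restrict_Icc (a b : ℝ) (ha : 0 ≤ a) :
    (volume.restrict (Set.Ici (0:ℝ))).restrict (Set.Icc a b) = volume.restrict (Set.Icc a b) := by
  rw [Measure.restrict_restrict measurableSet_Icc]
  congr 1
  exact Set.inter_eq_left.mpr (fun x hx => le_trans ha hx.1)

lemma aux_integrableOn (r : ℝ≥0∞) (hr : 1 ≤ r) (G : ℝ → ℝ)
    (hGLr : MemLp G r (volume.restrict (Set.Ici (0:ℝ)))) (a b : ℝ) (ha : 0 ≤ a) :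
    IntegrableOn G (Set.Icc a b) volume := by
  have h1 : MemLp G r (volume.restrict (Set.Icc a b)) := by
    rw [← aux_restrict_Icc a b ha]; exact hGLr.restrict _
  have : IsFiniteMeasure (volume.restrict (Set.Icc a b)) :=
    ⟨by rw [Measure.restrict_apply_univ]; exact measure_Icc_lt_top⟩
  exact memLp_one_iff_integrable.mp (h1.mono_exponent hr)

lemma aux_claimA (r : ℝ≥0∞) (hr : 1 ≤ r) (G : ℝ → ℝ)
    (hGLr : MemLp G r (volume.restrict (Set.Ici (0:ℝ)))) (ε : ℝ) (hε : 0 < ε) :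
    ∃ δ : ℝ, 0 < δ ∧ δ ≤ 1 ∧ ∀ a b : ℝ, 0 ≤ a → a ≤ b → b - a ≤ δ →
      ∫ u in Set.Icc a b, |G u| ≤ ε := by
  by_cases hr' : r = ⊤
  · -- bounded case
    subst hr'
    set C := (eLpNorm G ⊤ (volume.restrict (Set.Ici (0:ℝ)))).toReal with hC
    have hC0 : 0 ≤ C := ENNReal.toReal_nonneg
    have hbd : ∀ᵐ x ∂(volume.restrict (Set.Ici (0:ℝ))), |G x| ≤ C := by
      have h1 := enorm_ae_le_eLpNormEssSup G (volume.restrict (Set.Ici (0:ℝ)))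
      filter_upwards [h1] with x hx
      have hne : eLpNormEssSup G (volume.restrict (Set.Ici (0:ℝ))) ≠ ⊤ := by
        simpa [eLpNorm_exponent_top] using hGLr.2.ne
      have := ENNReal.toReal_mono hne hx
      simpa [hC, eLpNorm_exponent_top, Real.norm_eq_abs] using this
    refine ⟨min 1 (ε / (C + 1)), lt_min one_pos (by positivity), min_le_left _ _, ?_⟩
    intro a b ha hab hlen
    have hsub : Set.Icc a b ⊆ Set.Ici (0:ℝ) := fun x hx => le_trans ha hx.1
    have hbd' : ∀ᵐ x ∂(volume.restrict (Set.Icc a b)), |G x| ≤ C := by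
      rw [← aux_restrict_Icc a b ha]
      exact hbd.filter_mono (ae_mono Measure.restrict_le_self)
    have h2 : ∫ u in Set.Icc a b, |G u| ≤ ∫ _ in Set.Icc a b, C := by
      refine setIntegral_mono_ae_restrict ((aux_integrableOn ⊤ hr G hGLr a b ha).abs)
        (integrableOn_const measure_Icc_lt_top.ne) hbd'
    have h3 : ∫ _ in Set.Icc a b, C = (b - a) * C := by
      rw [setIntegral_const, measureReal_def, Real.volume_Icc, smul_eq_mul,
        ENNReal.toReal_ofReal (by linarith)]
    have hba : b - a ≤ ε / (C + 1) := le_trans hlen (min_le_right _ _)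
    have : (b - a) * C ≤ (ε / (C + 1)) * C := by
      apply mul_le_mul_of_nonneg_right hba hC0
    have hfin : (ε / (C + 1)) * C ≤ ε := by
      rw [div_mul_eq_mul_div, mul_comm]
      rw [div_le_iff₀ (by positivity)]
      nlinarith
    linarith [h2, h3.le]
  · -- r < ∞, use indicator smallness + Hölder
    obtain ⟨δ₀, hδ₀pos, hδ₀⟩ := hGLr.eLpNorm_indicator_le hr hr' hε
    refine ⟨min δ₀ 1, lt_min hδ₀pos one_pos, min_le_right _ _, ?_⟩
    intro a b ha hab hlen
    have hsub : Set.Icc a b ⊆ Set.Ici (0:ℝ) := fun x hx => le_trans ha hx.1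
    set ν := volume.restrict (Set.Ici (0:ℝ)) with hν
    set μI := volume.restrict (Set.Icc a b) with hμI
    have hres : ν.restrict (Set.Icc a b) = μI := aux_restrict_Icc a b ha
    have hμle : ν (Set.Icc a b) ≤ ENNReal.ofReal δ₀ := by
      rw [hν, Measure.restrict_apply measurableSet_Icc]
      refine le_trans (measure_mono Set.inter_subset_left) ?_
      rw [Real.volume_Icc]
      exact ENNReal.ofReal_le_ofReal (le_trans hlen (min_le_left _ _))
    have hkey := hδ₀ (Set.Icc a b) measurableSet_Icc hμle
    rw [eLpNorm_indicator_eq_eLpNorm_restrict measurableSet_Icc, hres] at hkey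
    have hsm : AEStronglyMeasurable G μI := by
      rw [← hres]; exact hGLr.1.restrict
    have hX : ∫ u in Set.Icc a b, |G u| = (eLpNorm G 1 μI).toReal := by
      rw [eLpNorm_one_eq_lintegral_enorm]
      have := integral_norm_eq_lintegral_enorm hsm
      simpa [Real.norm_eq_abs] using this.symm ▸ this
    have hμuniv : μI Set.univ ≤ 1 := by
      rw [hμI, Measure.restrict_apply_univ, Real.volume_Icc]
      calc ENNReal.ofReal (b - a) ≤ ENNReal.ofReal 1 :=
        ENNReal.ofReal_le_ofReal (le_trans hlen (min_le_right _ _))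
      _ = 1 := ENNReal.ofReal_one
    have hH : eLpNorm G 1 μI ≤ eLpNorm G r μI * μI Set.univ ^ (1 / (1:ℝ≥0∞).toReal - 1 / r.toReal) :=
      eLpNorm_le_eLpNorm_mul_rpow_measure_univ hr hsm
    have hpow : μI Set.univ ^ (1 / (1:ℝ≥0∞).toReal - 1 / r.toReal) ≤ 1 := by
      apply ENNReal.rpow_le_one hμuniv
      have hr1 : 1 ≤ r.toReal := by
        rw [← ENNReal.toReal_one]
        exact ENNReal.toReal_mono hr' hr
      simp only [ENNReal.toReal_one, one_div]
      have : r.toReal⁻¹ ≤ 1 := by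
        rw [inv_le_one_iff₀]; right; linarith
      linarith
    have hfinal : eLpNorm G 1 μI ≤ ENNReal.ofReal ε := by
      calc eLpNorm G 1 μI ≤ eLpNorm G r μI * μI Set.univ ^ (1 / (1:ℝ≥0∞).toReal - 1 / r.toReal) := hH
        _ ≤ ENNReal.ofReal ε * 1 := mul_le_mul' hkey hpow
        _ = ENNReal.ofReal ε := mul_one _
    rw [hX]
    exact ENNReal.toReal_le_of_le_ofReal hε.le hfinal

/-- If `F ∈ L^p([0,∞))` is nonnegative and locally absolutely continuous,
`G ∈ L^r([0,∞))`, and `F' ≤ G` a.e., then `F(t) → 0` as `t → ∞`. -/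
theorem tendsto_zero_of_memLp
    (p r : ℝ≥0∞) (hp : 1 ≤ p) (hp' : p ≠ ⊤) (hr : 1 ≤ r)
    (F F' G : ℝ → ℝ)
    (hFnonneg : ∀ t : ℝ, 0 ≤ t → 0 ≤ F t)
    (hFac : IsLocACReal F F')
    (hFLp : MemLp F p (volume.restrict (Set.Ici (0 : ℝ))))
    (hGLr : MemLp G r (volume.restrict (Set.Ici (0 : ℝ))))
    (hFG : ∀ᵐ t ∂(volume.restrict (Set.Ici (0 : ℝ))), F' t ≤ G t) :
    Tendsto F atTop (nhds 0) := by
  set q := p.toReal with hq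
  have hq0 : 0 < q := ENNReal.toReal_pos (lt_of_lt_of_le zero_lt_one hp).ne' hp'
  set H : ℝ → ℝ := fun u => |F u| ^ q with hH
  have hHnonneg : ∀ u, 0 ≤ H u := fun u => Real.rpow_nonneg (abs_nonneg _) _
  have hHint : IntegrableOn H (Set.Ici (0:ℝ)) volume := by
    have := hFLp.integrable_norm_rpow (lt_of_lt_of_le zero_lt_one hp).ne' hp'
    simpa [hH, Real.norm_eq_abs, IntegrableOn] using this
  rw [Metric.tendsto_atTop]
  intro ε hε
  obtain ⟨δ, hδpos, hδ1, hδ⟩ := aux_claimA r hr G hGLr (ε / 2) (half_pos hε)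
  set c : ℝ := (ε / 2) ^ q * δ with hc
  have hcpos : 0 < c := mul_pos (Real.rpow_pos_of_pos (half_pos hε) _) hδpos
  have hunion : ⋃ n : ℕ, Set.Icc (0:ℝ) n = Set.Ici 0 := by
    ext x
    simp only [Set.mem_iUnion, Set.mem_Icc, Set.mem_Ici]
    constructor
    · rintro ⟨n, hn, -⟩; exact hn
    · intro hx
      obtain ⟨n, hn⟩ := exists_nat_ge x
      exact ⟨n, hx, hn⟩
  have htend : Tendsto (fun n : ℕ => ∫ x in Set.Icc (0:ℝ) n, H x) atTop
      (nhds (∫ x in Set.Ici (0:ℝ), H x)) := by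
    have := tendsto_setIntegral_of_monotone (f := H) (μ := volume)
      (s := fun n : ℕ => Set.Icc (0:ℝ) n)
      (fun _ => measurableSet_Icc)
      (fun m n hmn => Set.Icc_subset_Icc le_rfl (by exact_mod_cast hmn))
      (by rw [hunion]; exact hHint)
    rwa [hunion] at this
  obtain ⟨N₀, hN₀⟩ := Metric.tendsto_atTop.mp htend c hcpos
  have hn := hN₀ N₀ le_rfl
  rw [Real.dist_eq] at hn
  set T : ℝ := (N₀ : ℝ) with hT
  have hT0 : 0 ≤ T := Nat.cast_nonneg _
  have hn' : (∫ x in Set.Ici (0:ℝ), H x) - (∫ x in Set.Icc (0:ℝ) T, H x) < c := by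
    have h := abs_lt.mp hn
    linarith [h.1, h.2]
  refine ⟨T + δ + 1, fun t ht => ?_⟩
  have htδ : 0 ≤ t - δ := by linarith
  have ht0 : (0:ℝ) ≤ t := by linarith
  rw [Real.dist_eq, sub_zero, abs_of_nonneg (hFnonneg t ht0)]
  by_contra hcon
  push_neg at hcon
  -- F ≥ ε/2 on [t - δ, t]
  have hstep : ∀ s, s ∈ Set.Icc (t - δ) t → ε / 2 ≤ F s := by
    intro s hs
    have hs0 : (0:ℝ) ≤ s := le_trans htδ hs.1
    have hst : s ≤ t := hs.2
    have hGi : IntervalIntegrable G volume s t := by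
      rw [intervalIntegrable_iff_integrableOn_Icc_of_le hst]
      exact aux_integrableOn r hr G hGLr s t hs0
    have hF'i : IntervalIntegrable F' volume s t := by
      rw [intervalIntegrable_iff]
      exact (hFac.1 s t hs0 ht0).mono_set Set.uIoc_subset_uIcc
    have h1 : F t - F s = ∫ u in s..t, F' u := hFac.2 s t hs0 ht0
    have h2 : (∫ u in s..t, F' u) ≤ ∫ u in s..t, G u := by
      apply intervalIntegral.integral_mono_ae_restrict hst hF'i hGi
      rw [← aux_restrict_Icc s t hs0]
      exact hFG.filter_mono (ae_mono Measure.restrict_le_self)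
    have h3 : (∫ u in s..t, G u) ≤ ε / 2 := by
      rw [intervalIntegral.integral_of_le hst]
      have hGIcc := aux_integrableOn r hr G hGLr s t hs0
      calc (∫ u in Set.Ioc s t, G u) ≤ ∫ u in Set.Ioc s t, |G u| :=
            setIntegral_mono_on (hGIcc.mono_set Set.Ioc_subset_Icc_self)
              (IntegrableOn.mono_set hGIcc.abs Set.Ioc_subset_Icc_self) measurableSet_Ioc
              (fun u _ => le_abs_self _)
        _ ≤ ∫ u in Set.Icc s t, |G u| :=
            setIntegral_mono_set hGIcc.abs (ae_of_all _ fun u => abs_nonneg _)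
              (HasSubset.Subset.eventuallyLE Set.Ioc_subset_Icc_self)
        _ ≤ ε / 2 := hδ s t hs0 hst (by linarith [hs.1])
    linarith
  have hsub2 : Set.Icc (t - δ) t ⊆ Set.Ici (0:ℝ) := fun x hx => le_trans htδ hx.1
  have hlow : c ≤ ∫ u in Set.Icc (t - δ) t, H u := by
    have hconst : (∫ _ in Set.Icc (t - δ) t, ((ε/2) ^ q : ℝ)) = c := by
      rw [setIntegral_const, measureReal_def, Real.volume_Icc, smul_eq_mul,
        ENNReal.toReal_ofReal (by linarith)]
      rw [hc]; ring
    rw [← hconst]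
    refine setIntegral_mono_on (integrableOn_const measure_Icc_lt_top.ne)
      (hHint.mono_set hsub2) measurableSet_Icc (fun u hu => ?_)
    exact Real.rpow_le_rpow (half_pos hε).le (le_trans (hstep u hu) (le_abs_self _)) hq0.le
  have hdisj : Disjoint (Set.Icc (0:ℝ) T) (Set.Icc (t - δ) t) := by
    rw [Set.disjoint_left]
    intro x hx hx'
    linarith [hx.2, hx'.1]
  have hup : (∫ u in Set.Icc (0:ℝ) T, H u) + (∫ u in Set.Icc (t - δ) t, H u)
      ≤ ∫ u in Set.Ici (0:ℝ), H u := by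
    rw [← setIntegral_union hdisj measurableSet_Icc
      (hHint.mono_set (fun x hx => hx.1)) (hHint.mono_set hsub2)]
    refine setIntegral_mono_set hHint (ae_of_all _ hHnonneg)
      (HasSubset.Subset.eventuallyLE ?_)
    rintro x (hx | hx)
    · exact hx.1
    · exact hsub2 hx
  linarith
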